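/- Let u ∈ ℂ with 0 < Re u < 1/2 and ζ(2u) ≠ 0. Then (2^{1−2u} − 1) · (cos(πu/2) + sin(πu/2)) · π^{−u} · Γ(u) = 2 · Γ_u · ζ₂(1−2u) / ζ(2u). -/

import Mathlib

open Complex

/-- `Γ_u = (8/π)^{-u} Γ((1/2-u)/2) / Γ((1/2+u)/2)`. -/
noncomputable def GammaFactor (α : ℂ) : ℂ :=
  ((8 / Real.pi : ℝ) : ℂ) ^ (-α) *
    Complex.Gamma ((1 / 2 - α) / 2) / Complex.Gamma ((1 / 2 + α) / 2)

/-- `ζ₂(s) = (1 - 2^{-s}) ζ(s)`, the zeta function without its Euler factor at 2. -/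
noncomputable def zeta2 (s : ℂ) : ℂ := (1 - (2 : ℂ) ^ (-s)) * riemannZeta s

lemma sinpi_ne_zero' {z : ℂ} (h0 : 0 < z.re) (h1 : z.re < 1) :
    Complex.sin (↑Real.pi * z) ≠ 0 := by
  rw [Complex.sin_ne_zero_iff]
  intro k hk
  have hπ : (Real.pi : ℂ) ≠ 0 := Complex.ofReal_ne_zero.2 Real.pi_ne_zero
  have hz : z = (k : ℂ) := by
    apply mul_left_cancel₀ hπ
    rw [hk]; ring
  rw [hz] at h0 h1
  simp at h0 h1
  have h0' : 0 < k := by exact_mod_cast h0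
  have h1' : k < 1 := by exact_mod_cast h1
  omega

lemma cospi_ne_zero' {z : ℂ} (h0 : 0 ≤ z.re) (h1 : z.re < 1/2) :
    Complex.cos (↑Real.pi * z) ≠ 0 := by
  rw [Complex.cos_ne_zero_iff]
  intro k hk
  have hπ : (Real.pi : ℂ) ≠ 0 := Complex.ofReal_ne_zero.2 Real.pi_ne_zero
  have hz : z = (2*k+1)/2 := by
    apply mul_left_cancel₀ hπ
    rw [hk]; ring
  rw [hz] at h0 h1
  have hre : ((((2*(k:ℂ)+1)/2)).re : ℝ) = (2*(k:ℝ)+1)/2 := by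
    simp [Complex.div_re, Complex.add_re, Complex.normSq]
  rw [hre] at h0 h1
  have h0' : (0:ℤ) ≤ 2*k+1 := by exact_mod_cast (by linarith : (0:ℝ) ≤ 2*(k:ℝ)+1)
  have h1' : (2*k+1 : ℤ) < 1 := by exact_mod_cast (by linarith : 2*(k:ℝ)+1 < 1)
  omega

set_option maxHeartbeats 2000000 in
/-- The Archimedean identity of Lemma 6.2. -/
theorem archimedean_identity (u : ℂ) (h0 : 0 < u.re) (h1 : u.re < 1 / 2)
    (hζ : riemannZeta (2 * u) ≠ 0) :
    ((2 : ℂ) ^ (1 - 2 * u) - 1) *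
        (Complex.cos (Real.pi * u / 2) + Complex.sin (Real.pi * u / 2)) *
        ((Real.pi : ℂ)) ^ (-u) * Complex.Gamma u =
      2 * GammaFactor u * zeta2 (1 - 2 * u) / riemannZeta (2 * u) := by
  have hπpos := Real.pi_pos
  have hπ : (Real.pi : ℂ) ≠ 0 := Complex.ofReal_ne_zero.2 Real.pi_ne_zero
  have h2 : (2:ℂ) ≠ 0 := two_ne_zero
  have hA0 : (2:ℂ)^u ≠ 0 := by rw [Ne, Complex.cpow_eq_zero_iff]; simp
  have hP0 : ((Real.pi:ℝ):ℂ)^u ≠ 0 := by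
    rw [Ne, Complex.cpow_eq_zero_iff]; simp [Real.pi_ne_zero]
  have hr2 : ((Real.sqrt 2 : ℝ):ℂ) ≠ 0 := by
    simp [Real.sqrt_eq_zero']
  have h22 : ((Real.sqrt 2 : ℝ):ℂ) * ((Real.sqrt 2 : ℝ):ℂ) = 2 := by
    rw [← Complex.ofReal_mul, Real.mul_self_sqrt (by norm_num)]
    norm_num
  have hsqπ : ((Real.sqrt Real.pi : ℝ):ℂ) * ((Real.sqrt Real.pi : ℝ):ℂ) = ↑Real.pi := by
    rw [← Complex.ofReal_mul, Real.mul_self_sqrt hπpos.le]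
  -- trig atoms
  set C := Complex.cos (↑Real.pi * u / 2) with hC
  set S := Complex.sin (↑Real.pi * u / 2) with hS
  -- nonvanishing
  have hSne : S ≠ 0 := by
    rw [hS, show (↑Real.pi * u / 2 : ℂ) = ↑Real.pi * (u/2) from by ring]
    apply sinpi_ne_zero' <;>
      simp [Complex.div_re, Complex.normSq] <;> nlinarith
  have hCne : C ≠ 0 := by
    rw [hC, show (↑Real.pi * u / 2 : ℂ) = ↑Real.pi * (u/2) from by ring]
    apply cospi_ne_zero' <;>
      simp [Complex.div_re, Complex.normSq] <;> nlinarith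
  -- trig identities
  have hcosu : Complex.cos (↑Real.pi * u) = C^2 - S^2 := by
    rw [show (↑Real.pi * u : ℂ) = ↑Real.pi * u / 2 + ↑Real.pi * u / 2 from by ring,
      Complex.cos_add, ← hC, ← hS]
    try ring
  have hsinu : Complex.sin (↑Real.pi * u) = 2 * S * C := by
    rw [show (↑Real.pi * u : ℂ) = 2 * (↑Real.pi * u / 2) from by ring,
      Complex.sin_two_mul, ← hC, ← hS]
    try ring
  have hsin2u : Complex.sin (↑Real.pi * (2*u)) = 2 * (2*S*C) * (C^2 - S^2) := by
    rw [show (↑Real.pi * (2*u) : ℂ) = 2 * (↑Real.pi * u) from by ring,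
      Complex.sin_two_mul, hsinu, hcosu]
  have hcos2u2 : Complex.cos (↑Real.pi * (2*u) / 2) = C^2 - S^2 := by
    rw [show (↑Real.pi * (2*u) / 2 : ℂ) = ↑Real.pi * u from by ring, hcosu]
  have hsin4 : Complex.sin (↑Real.pi * ((1/2+u)/2)) = (C + S) / ↑(Real.sqrt 2) := by
    rw [show (↑Real.pi * ((1/2+u)/2) : ℂ) = ↑((Real.pi/4 : ℝ)) + ↑Real.pi * u / 2 from by
        push_cast; ring,
      Complex.sin_add, ← Complex.ofReal_sin, ← Complex.ofReal_cos,
      Real.sin_pi_div_four, Real.cos_pi_div_four, ← hC, ← hS, eq_div_iff hr2]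
    push_cast
    linear_combination (C + S)/2 * h22
  have hCSne : C + S ≠ 0 := by
    intro h
    apply sinpi_ne_zero' (z := (1/2+u)/2)
      (by simp [Complex.div_re, Complex.normSq, Complex.add_re] ; nlinarith)
      (by simp [Complex.div_re, Complex.normSq, Complex.add_re] ; nlinarith)
    rw [hsin4, h, zero_div]
  -- Gamma nonvanishing
  have hG1 : Complex.Gamma (1 - u) ≠ 0 := by
    apply Complex.Gamma_ne_zero_of_re_pos; simp; linarith
  have hG2 : Complex.Gamma (1 - 2*u) ≠ 0 := by
    apply Complex.Gamma_ne_zero_of_re_pos; simp [Complex.mul_re]; linarith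
  have hG3 : Complex.Gamma (1 - (1/2+u)/2) ≠ 0 := by
    apply Complex.Gamma_ne_zero_of_re_pos
    simp [Complex.div_re, Complex.sub_re, Complex.add_re, Complex.normSq]
    nlinarith
  -- sin nonvanishing
  have hsinu_ne : Complex.sin (↑Real.pi * u) ≠ 0 := by
    apply sinpi_ne_zero' h0; linarith
  have hsin2u_ne : Complex.sin (↑Real.pi * (2*u)) ≠ 0 := by
    apply sinpi_ne_zero' <;> simp [Complex.mul_re] <;> linarith
  have hsin4_ne : Complex.sin (↑Real.pi * ((1/2+u)/2)) ≠ 0 := by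
    apply sinpi_ne_zero' <;>
      simp [Complex.div_re, Complex.normSq, Complex.add_re] <;> nlinarith
  have hC2S2 : C^2 - S^2 ≠ 0 := by
    rw [← hcosu]
    exact cospi_ne_zero' h0.le h1
  -- Gamma identities
  have L1 := Complex.Gamma_mul_Gamma_one_sub u
  rw [eq_div_iff hsinu_ne] at L1
  have hGu : Complex.Gamma u =
      ↑Real.pi / (Complex.sin (↑Real.pi * u) * Complex.Gamma (1 - u)) := by
    rw [eq_div_iff (mul_ne_zero hsinu_ne hG1)]
    linear_combination L1
  have L2 := Complex.Gamma_mul_Gamma_one_sub (2*u)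
  rw [eq_div_iff hsin2u_ne] at L2
  have hG2u : Complex.Gamma (2*u) =
      ↑Real.pi / (Complex.sin (↑Real.pi * (2*u)) * Complex.Gamma (1 - 2*u)) := by
    rw [eq_div_iff (mul_ne_zero hsin2u_ne hG2)]
    linear_combination L2
  have L3 := Complex.Gamma_mul_Gamma_one_sub ((1/2+u)/2)
  rw [eq_div_iff hsin4_ne] at L3
  have hG5 : Complex.Gamma ((1/2+u)/2) =
      ↑Real.pi / (Complex.sin (↑Real.pi * ((1/2+u)/2)) * Complex.Gamma (1 - (1/2+u)/2)) := by
    rw [eq_div_iff (mul_ne_zero hsin4_ne hG3)]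
    linear_combination L3
  -- Legendre duplication
  have hsqrt2C : (2:ℂ) ^ ((1:ℂ)/2) = ((Real.sqrt 2 : ℝ):ℂ) := by
    rw [show ((1:ℂ)/2) = (((1/2 : ℝ)):ℂ) from by norm_num,
      show ((2:ℂ)) = (((2:ℝ)):ℂ) from by norm_num,
      ← Complex.ofReal_cpow (by norm_num : (0:ℝ) ≤ 2)]
    norm_num [Real.sqrt_eq_rpow]
  have L4 := Complex.Gamma_mul_Gamma_add_half ((1/2-u)/2)
  rw [show ((1:ℂ)/2-u)/2 + 1/2 = 1 - (1/2+u)/2 from by ring,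
    show 1-2*(((1:ℂ)/2-u)/2) = 1/2 + u from by ring,
    show 2*(((1:ℂ)/2-u)/2) = 1/2 - u from by ring,
    Complex.cpow_add _ _ h2, hsqrt2C] at L4
  have L5 := Complex.Gamma_mul_Gamma_add_half ((1:ℂ)/2-u)
  rw [show (1:ℂ)/2-u + 1/2 = 1 - u from by ring,
    show 1-2*((1:ℂ)/2-u) = 2*u from by ring,
    show 2*((1:ℂ)/2-u) = 1 - 2*u from by ring,
    show ((2:ℂ))^(2*u) = ((2:ℂ)^u)^2 from by
      rw [show (2*u:ℂ) = ((2:ℕ):ℂ)*u from by norm_num, Complex.cpow_nat_mul]] at L5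
  have hG4 : Complex.Gamma (((1:ℂ)/2-u)/2) =
      Complex.Gamma (1 - 2*u) * ((2:ℂ)^u)^3 * ↑Real.pi * ↑(Real.sqrt 2) /
        (Complex.Gamma (1 - u) * Complex.Gamma (1 - (1/2+u)/2)) := by
    rw [eq_div_iff (mul_ne_zero hG1 hG3)]
    linear_combination Complex.Gamma (1-u) * L4 +
      ↑(Real.sqrt 2) * (2:ℂ)^u * ↑(Real.sqrt Real.pi) * L5 +
      Complex.Gamma (1-2*u) * ((2:ℂ)^u)^3 * ↑(Real.sqrt 2) * hsqπ
  -- power identities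
  have p1 : (2:ℂ)^(1-2*u) = 2 / ((2:ℂ)^u)^2 := by
    rw [show (1:ℂ)-2*u = 1 + -(u+u) from by ring, Complex.cpow_add _ _ h2,
      Complex.cpow_one, Complex.cpow_neg, Complex.cpow_add _ _ h2]
    ring
  have p2 : (2:ℂ)^(-(1-2*u)) = ((2:ℂ)^u)^2 / 2 := by
    rw [show -((1:ℂ)-2*u) = -1 + (u+u) from by ring, Complex.cpow_add _ _ h2,
      Complex.cpow_neg, Complex.cpow_one, Complex.cpow_add _ _ h2]
    ring
  have p3 : ((2:ℂ) * ↑Real.pi) ^ (-(2*u)) = (((2:ℂ)^u)^2 * (((Real.pi:ℝ):ℂ)^u)^2)⁻¹ := by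
    have hp2 : ∀ x : ℂ, x ^ (2*u) = (x^u)^2 := fun x => by
      rw [show (2*u:ℂ) = ((2:ℕ):ℂ)*u from by norm_num, Complex.cpow_nat_mul]
    have key : ((2:ℂ) * ↑Real.pi) ^ (2*u) = (2:ℂ)^(2*u) * ((Real.pi:ℝ):ℂ)^(2*u) := by
      rw [show ((2:ℂ) * (↑Real.pi:ℂ)) = ((2:ℝ):ℂ) * ((Real.pi:ℝ):ℂ) from by norm_num,
        Complex.mul_cpow_ofReal_nonneg (by norm_num) Real.pi_pos.le]
      norm_num
    rw [Complex.cpow_neg, key, hp2, hp2]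
  have p4 : ((Real.pi:ℝ):ℂ)^(-u) = (((Real.pi:ℝ):ℂ)^u)⁻¹ := Complex.cpow_neg _ _
  have p5 : ((8/Real.pi : ℝ) : ℂ) ^ (-u) = ((Real.pi:ℝ):ℂ)^u / ((2:ℂ)^u)^3 := by
    have harg : (↑Real.pi:ℂ).arg ≠ Real.pi := by
      rw [Complex.arg_ofReal_of_nonneg Real.pi_pos.le]
      exact Real.pi_pos.ne
    rw [show ((8/Real.pi : ℝ) : ℂ) = ((8:ℝ):ℂ) * ((Real.pi⁻¹:ℝ):ℂ) from by push_cast; ring,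
      Complex.mul_cpow_ofReal_nonneg (by norm_num) (inv_nonneg.2 Real.pi_pos.le),
      show ((8:ℝ):ℂ) = ((2:ℝ):ℂ) * ((4:ℝ):ℂ) from by norm_num,
      Complex.mul_cpow_ofReal_nonneg (by norm_num) (by norm_num),
      show ((4:ℝ):ℂ) = ((2:ℝ):ℂ) * ((2:ℝ):ℂ) from by norm_num,
      Complex.mul_cpow_ofReal_nonneg (by norm_num) (by norm_num),
      Complex.ofReal_inv, Complex.inv_cpow _ _ harg,
      show ((2:ℝ):ℂ) = (2:ℂ) from by norm_num, Complex.cpow_neg, Complex.cpow_neg]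
    rw [inv_inv]
    field_simp
  -- functional equation
  have hs : ∀ n : ℕ, 2*u ≠ -n := by
    intro n h
    have := congrArg Complex.re h
    simp [Complex.mul_re] at this
    have : (0:ℝ) ≤ n := n.cast_nonneg
    linarith
  have hs1 : 2*u ≠ 1 := by
    intro h
    have := congrArg Complex.re h
    simp [Complex.mul_re] at this
    linarith
  unfold zeta2 GammaFactor
  rw [riemannZeta_one_sub hs hs1, eq_div_iff hζ]
  rw [hGu, hG2u, hG5, hG4, p1, p2, p3, p4, p5, hsinu, hsin2u, hsin4, hcos2u2]
  set D := C^2 - S^2 with hD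
  set g1 := Complex.Gamma (1 - u) with hg1
  set g2 := Complex.Gamma (1 - 2*u) with hg2
  set g3 := Complex.Gamma (1 - (1/2+u)/2) with hg3
  set a := (2:ℂ)^u with ha
  set p := ((Real.pi:ℝ):ℂ)^u with hp
  clear_value C S D g1 g2 g3 a p
  field_simp [hSne, hCne, hC2S2, hG1, hG2, hG3, hA0, hP0, hπ, hr2]
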